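/- For the double complex D of the previous example (D^{p,-p} = D^{p,-p-1} = ℤ, horizontal differential -id, vertical differential multiplication by 2), the element 1 ∈ D^{0,0} also represents a nonzero class in H^0 of the left truncated totalisation ltTot D; in particular ltTot D is not acyclic even though the rows of D are exact. -/
import Mathlib

noncomputable section

namespace Novikov
variable (S : Type*) [Semiring S]
variable (D : ℤ → ℤ → Type*) [∀ p q, AddCommGroup (D p q)] [∀ p q, Module S (D p q)]

/-- Transport along equalities of the indices of a bigraded family of modules. -/
def lcast (p p' q q' : ℤ) (h1 : p = p') (h2 : q = q') : D p q →ₗ[S] D p' q' := by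
  subst h1; subst h2; exact LinearMap.id

variable (dh : ∀ p q, D p q →ₗ[S] D (p + 1) q) (dv : ∀ p q, D p q →ₗ[S] D p (q + 1))

/-- The component at `p` of the total differential `d = d^h + d^v`. -/
def totalD (n : ℤ) (x : ∀ p, D p (n - p)) (p : ℤ) : D p (n + 1 - p) :=
  lcast S D p p (n - p + 1) (n + 1 - p) rfl (by ring) (dv p (n - p) (x p)) +
    lcast S D (p - 1 + 1) p (n - (p - 1)) (n + 1 - p) (by ring) (by ring)
      (dh (p - 1) (n - (p - 1)) (x (p - 1)))

/-- The example double complex of abelian groups: `D^{p,-p} = D^{p,-p-1} = ℤ`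
(realised as `Fin 1 → ℤ`), all other entries `0` (realised as `Fin 0 → ℤ`). -/
abbrev Dex (p q : ℤ) : Type := Fin (if q = -p ∨ q = -p - 1 then 1 else 0) → ℤ

lemma Dex_pos {p q : ℤ} (h : q = -p ∨ q = -p - 1) :
    0 < (if q = -p ∨ q = -p - 1 then 1 else 0) := by rw [if_pos h]; omega

/-- The horizontal differential of the example: `-id : D^{p,-p-1} → D^{p+1,-p-1}`,
and zero elsewhere. -/
def dhEx (p q : ℤ) : Dex p q →ₗ[ℤ] Dex (p + 1) q where
  toFun x j := if h : q = -p - 1 then -(x ⟨0, Dex_pos (Or.inr h)⟩) else 0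
  map_add' x y := by funext j; by_cases h : q = -p - 1 <;> simp [h, neg_add] <;> ring
  map_smul' c x := by funext j; by_cases h : q = -p - 1 <;> simp [h] <;> ring

/-- The vertical differential of the example: multiplication by `2`,
`D^{p,-p-1} → D^{p,-p}`, and zero elsewhere. -/
def dvEx (p q : ℤ) : Dex p q →ₗ[ℤ] Dex p (q + 1) where
  toFun x j := if h : q = -p - 1 then 2 * x ⟨0, Dex_pos (Or.inr h)⟩ else 0
  map_add' x y := by funext j; by_cases h : q = -p - 1 <;> simp [h] <;> ring
  map_smul' c x := by funext j; by_cases h : q = -p - 1 <;> simp [h] <;> ring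

/-- The degree-`0` cocycle of the direct-sum totalisation corresponding to
`1 ∈ D^{0,0}`. -/
def xEx : ∀ p, Dex p (0 - p) := fun p _ => if p = 0 then 1 else 0

end Novikov
namespace Novikov

/-- Extract the unique integer coordinate of an element of `Dex p q` (or `0`). -/
def val {p q : ℤ} (x : Dex p q) : ℤ :=
  if h : q = -p ∨ q = -p - 1 then x ⟨0, Dex_pos h⟩ else 0

lemma val_eq {p q : ℤ} (h : q = -p ∨ q = -p - 1) (x : Dex p q) :
    val x = x ⟨0, Dex_pos h⟩ := dif_pos h

lemma val_zero {p q : ℤ} : val (0 : Dex p q) = 0 := by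
  unfold val; split <;> rfl

lemma val_add {p q : ℤ} (x y : Dex p q) : val (x + y) = val x + val y := by
  unfold val; split <;> simp

lemma eq_of_val {p q : ℤ} (x y : Dex p q) (h : val x = val y) : x = y := by
  funext j
  by_cases hq : q = -p ∨ q = -p - 1
  · rw [val_eq hq, val_eq hq] at h
    have hj : j = ⟨0, Dex_pos hq⟩ := by
      apply Fin.ext
      have h1 := j.isLt
      have h2 : (if q = -p ∨ q = -p - 1 then 1 else 0) = 1 := if_pos hq
      omega
    rw [hj]; exact h
  · exfalso
    have h1 := j.isLt
    have h2 : (if q = -p ∨ q = -p - 1 then 1 else 0) = 0 := if_neg hq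
    omega

lemma val_lcast {p p' q q' : ℤ} (h1 : p = p') (h2 : q = q') (x : Dex p q) :
    val (lcast ℤ Dex p p' q q' h1 h2 x) = val x := by subst h1; subst h2; rfl

lemma val_dvEx (p q : ℤ) (x : Dex p q) :
    val (dvEx p q x) = if q = -p - 1 then 2 * val x else 0 := by
  by_cases h : q = -p - 1
  · rw [if_pos h, val_eq (p := p) (q := q + 1) (Or.inl (by omega)), val_eq (Or.inr h)]
    exact dif_pos h
  · rw [if_neg h]
    unfold val
    split
    · show (if h : q = -p - 1 then _ else (0:ℤ)) = 0
      rw [dif_neg h]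
    · rfl

lemma val_dhEx (p q : ℤ) (x : Dex p q) :
    val (dhEx p q x) = if q = -p - 1 then -val x else 0 := by
  by_cases h : q = -p - 1
  · rw [if_pos h, val_eq (p := p + 1) (q := q) (Or.inl (by omega)), val_eq (Or.inr h)]
    exact dif_pos h
  · rw [if_neg h]
    unfold val
    split
    · show (if h : q = -p - 1 then _ else (0:ℤ)) = 0
      rw [dif_neg h]
    · rfl

lemma val_totalD (n : ℤ) (y : ∀ p, Dex p (n - p)) (p : ℤ) :
    val (totalD ℤ Dex dhEx dvEx n y p) =
      (if n - p = -p - 1 then 2 * val (y p) else 0) +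
      (if n - (p - 1) = -(p - 1) - 1 then -val (y (p - 1)) else 0) := by
  unfold totalD
  rw [val_add, val_lcast, val_lcast, val_dvEx, val_dhEx]

end Novikov

open Novikov in
theorem ltTot_not_acyclic :
    (∀ p q (v : Dex (p + 1) q), dhEx (p + 1) q v = 0 → ∃ u : Dex p q, dhEx p q u = v) ∧
    (∀ p, totalD ℤ Dex dhEx dvEx 0 xEx p = 0) ∧
    ¬ ∃ y : ∀ p, Dex p (0 - 1 - p), (∃ k, ∀ p < k, y p = 0) ∧
        ∀ p, lcast ℤ Dex p p (0 - 1 + 1 - p) (0 - p) rfl (by ring)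
          (totalD ℤ Dex dhEx dvEx (0 - 1) y p) = xEx p := by
  refine ⟨?_, ?_, ?_⟩
  · -- rows of `D` are exact
    intro p q v hv
    by_cases h1 : q = -p - 1
    · refine ⟨(fun _ => -val v : Dex p q), eq_of_val _ _ ?_⟩
      rw [val_dhEx, if_pos h1, val_eq (Or.inr h1)]
      exact neg_neg _
    · refine ⟨0, eq_of_val _ _ ?_⟩
      rw [map_zero, val_zero]
      by_cases h2 : q = -(p + 1) - 1
      · have h3 := congrArg val hv
        rw [val_dhEx, if_pos h2, val_zero] at h3
        omega
      · unfold val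
        rw [dif_neg (by omega)]
  · -- `xEx` is a cocycle
    intro p
    apply eq_of_val
    rw [val_totalD, if_neg (by omega), if_neg (by omega), val_zero, add_zero]
  · -- but not a coboundary of a left-truncated element
    rintro ⟨y, ⟨k, hk⟩, hy⟩
    set a : ℤ → ℤ := fun p => val (y p) with ha
    have key : ∀ p, 2 * a p - a (p - 1) = if p = 0 then 1 else 0 := by
      intro p
      have h := congrArg val (hy p)
      rw [val_lcast, val_totalD, if_pos (by omega), if_pos (by omega),
        val_eq (Or.inl (by omega : (0:ℤ) - p = -p))] at h
      have hx : xEx p ⟨0, Dex_pos (Or.inl (by omega : (0:ℤ) - p = -p))⟩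
          = if p = 0 then 1 else 0 := rfl
      rw [hx] at h
      rw [← h, ha]
      ring
    have step : ∀ n : ℕ, a (-1 - n) ≠ 0 := by
      intro n
      induction n with
      | zero =>
        have h0 := key 0
        rw [if_pos rfl] at h0
        have : a (-1 - (0:ℕ)) = a (0 - 1) := by norm_num
        omega
      | succ m ih =>
        have h1 := key (-1 - m)
        rw [if_neg (by omega)] at h1
        intro h0
        apply ih
        have h2 : a (-1 - (m + 1 : ℕ)) = a ((-1 - m : ℤ) - 1) := by
          congr 1
          push_cast
          ring
        omega
    obtain ⟨n, hn⟩ : ∃ n : ℕ, (-1 : ℤ) - n < k := ⟨(1 - k).toNat, by omega⟩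
    have := congrArg val (hk _ hn)
    rw [val_zero] at this
    exact step n this
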